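/- Second discrete Frenet equation (inscribed case): for a discrete curve satisfying the positive-twist condition, for every i ∈ ℤ one has (DNᵉ)ᵢ = −κᵢ • Tᵛᵢ + τᵢ • Bᵛᵢ, where κᵢ := ‖(DTᵉ)ᵢ‖ and τᵢ := ‖(DBᵉ)ᵢ‖. -/

import Mathlib

open RealInnerProductSpace

noncomputable section

/-- Points of a discrete curve live in `ℝ³` with the Euclidean norm. -/
abbrev E3 := EuclideanSpace ℝ (Fin 3)

/-- The cross product on `ℝ³`. -/
def cross3 (u v : E3) : E3 :=
  WithLp.toLp 2 ![u 1 * v 2 - u 2 * v 1, u 2 * v 0 - u 0 * v 2, u 0 * v 1 - u 1 * v 0]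

lemma inner3 (x y : E3) : ⟪x, y⟫ = x 0 * y 0 + x 1 * y 1 + x 2 * y 2 := by
  simp [PiLp.inner_apply, Fin.sum_univ_three, RCLike.inner_apply, mul_comm]
lemma cross3_c0 (u v : E3) : cross3 u v 0 = u 1 * v 2 - u 2 * v 1 := rfl
lemma cross3_c1 (u v : E3) : cross3 u v 1 = u 2 * v 0 - u 0 * v 2 := rfl
lemma cross3_c2 (u v : E3) : cross3 u v 2 = u 0 * v 1 - u 1 * v 0 := rfl
lemma e3ext {x y : E3} (h0 : x 0 = y 0) (h1 : x 1 = y 1) (h2 : x 2 = y 2) : x = y := by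
  ext i; fin_cases i <;> assumption
lemma sub_apply3 (x y : E3) (i : Fin 3) : (x - y) i = x i - y i := rfl
lemma add_apply3 (x y : E3) (i : Fin 3) : (x + y) i = x i + y i := rfl
lemma smul_apply3 (r : ℝ) (x : E3) (i : Fin 3) : (r • x) i = r * x i := rfl
lemma cross3_sub_left (a b t : E3) : cross3 (a - b) t = cross3 a t - cross3 b t := by
  apply e3ext <;> simp only [cross3_c0, cross3_c1, cross3_c2, sub_apply3] <;> ring
lemma cross3_sub_right (a b c : E3) : cross3 a (b - c) = cross3 a b - cross3 a c := by
  apply e3ext <;> simp only [cross3_c0, cross3_c1, cross3_c2, sub_apply3] <;> ring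
lemma cross3_smul_left (r : ℝ) (a b : E3) : cross3 (r • a) b = r • cross3 a b := by
  apply e3ext <;> simp only [cross3_c0, cross3_c1, cross3_c2, smul_apply3] <;> ring
lemma inner_cross3_right (a b : E3) : ⟪cross3 a b, b⟫ = 0 := by
  simp only [inner3, cross3_c0, cross3_c1, cross3_c2]; ring
lemma inner_cross3_left (a b : E3) : ⟪cross3 a b, a⟫ = 0 := by
  simp only [inner3, cross3_c0, cross3_c1, cross3_c2]; ring
lemma cross3_cross3 (a b c : E3) :
    cross3 (cross3 a b) c = ⟪a, c⟫ • b - ⟪b, c⟫ • a := by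
  apply e3ext <;>
    simp only [cross3_c0, cross3_c1, cross3_c2, inner3, sub_apply3, smul_apply3] <;> ring
lemma lagrange3 (a b : E3) : ⟪cross3 a b, cross3 a b⟫ = ⟪a,a⟫ * ⟪b,b⟫ - ⟪a,b⟫^2 := by
  simp only [inner3, cross3_c0, cross3_c1, cross3_c2]; ring
lemma gram3 (a b t : E3) : ⟪a, cross3 b t⟫^2 =
    ⟪a,a⟫*⟪b,b⟫*⟪t,t⟫ + 2*⟪a,b⟫*⟪b,t⟫*⟪a,t⟫
      - ⟪a,a⟫*⟪b,t⟫^2 - ⟪b,b⟫*⟪a,t⟫^2 - ⟪t,t⟫*⟪a,b⟫^2 := by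
  simp only [inner3, cross3_c0, cross3_c1, cross3_c2]; ring
lemma inner_cross3_sub_add (a b t : E3) :
    ⟪cross3 (a - b) t, a + b⟫ = -2 * ⟪a, cross3 b t⟫ := by
  simp only [inner3, cross3_c0, cross3_c1, cross3_c2, sub_apply3, add_apply3]; ring

lemma sq_eq_of_nonneg {a b : ℝ} (ha : 0 ≤ a) (hb : 0 ≤ b) (h : a^2 = b^2) : a = b := by
  nlinarith [sq_nonneg (a - b), sq_nonneg (a + b)]

lemma frenet_even (t t' : E3) (ht : ‖t‖ = 1) (ht' : ‖t'‖ = 1)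
    (hX : cross3 t t' ≠ 0) (hsum : t' + t ≠ 0) :
    cross3 (‖cross3 t t'‖⁻¹ • cross3 t t') (t' - t)
      = -(‖t' - t‖) • (‖t' + t‖⁻¹ • (t' + t)) := by
  have htt : ⟪t, t⟫ = 1 := by rw [real_inner_self_eq_norm_sq, ht]; norm_num
  have ht't' : ⟪t', t'⟫ = 1 := by rw [real_inner_self_eq_norm_sq, ht']; norm_num
  set c : ℝ := ⟪t, t'⟫ with hc
  have hct : ⟪t', t⟫ = c := by rw [hc]; exact real_inner_comm t t'
  set w := ‖cross3 t t'‖ with hw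
  set u := ‖t' - t‖ with hu
  set v := ‖t' + t‖ with hv
  have hwpos : 0 < w := norm_pos_iff.mpr hX
  have hvpos : 0 < v := norm_pos_iff.mpr hsum
  have hw2 : w ^ 2 = 1 - c ^ 2 := by
    rw [hw, ← real_inner_self_eq_norm_sq, lagrange3, htt, ht't']; ring
  have hu2 : u ^ 2 = 2 - 2 * c := by
    rw [hu, norm_sub_sq_real, hct, ht, ht']; ring
  have hv2 : v ^ 2 = 2 + 2 * c := by
    rw [hv, norm_add_sq_real, hct, ht, ht']; ring
  have hc1 : c < 1 := by nlinarith
  have hupos : 0 < u := by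
    have h0 : 0 ≤ u := norm_nonneg _
    nlinarith
  have hscal : w⁻¹ * (c - 1) = -u * v⁻¹ := by
    have key : (1 - c) * v = u * w := by
      apply sq_eq_of_nonneg (mul_nonneg (by linarith) hvpos.le)
        (mul_nonneg hupos.le hwpos.le)
      nlinarith
    field_simp
    linear_combination -key
  calc cross3 (w⁻¹ • cross3 t t') (t' - t)
      = w⁻¹ • cross3 (cross3 t t') (t' - t) := cross3_smul_left _ _ _
    _ = w⁻¹ • ((c - 1) • (t' + t)) := by
        rw [cross3_cross3, inner_sub_right, inner_sub_right, htt, ht't', hct, ← hc,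
          show (c - 1 : ℝ) = c - 1 from rfl]
        rw [show (1 - c : ℝ) • t = -((c - 1) • t) by rw [← neg_smul]; ring_nf,
          sub_neg_eq_add, ← smul_add]
    _ = (w⁻¹ * (c - 1)) • (t' + t) := smul_smul _ _ _
    _ = (-u * v⁻¹) • (t' + t) := by rw [hscal]
    _ = -u • (v⁻¹ • (t' + t)) := (smul_smul _ _ _)  |>.symm

lemma frenet_odd (a b t : E3) (ha : ‖a‖ = 1) (hb : ‖b‖ = 1) (ht : ‖t‖ = 1)
    (hat : ⟪a, t⟫ = 0) (hbt : ⟪b, t⟫ = 0) (htw : ⟪a, cross3 b t⟫ ≤ 0)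
    (hsum : a + b ≠ 0) :
    cross3 (a - b) t = ‖a - b‖ • (‖a + b‖⁻¹ • (a + b)) := by
  have htt : ⟪t, t⟫ = 1 := by rw [real_inner_self_eq_norm_sq, ht]; norm_num
  have haa : ⟪a, a⟫ = 1 := by rw [real_inner_self_eq_norm_sq, ha]; norm_num
  have hbb : ⟪b, b⟫ = 1 := by rw [real_inner_self_eq_norm_sq, hb]; norm_num
  set c : ℝ := ⟪a, b⟫ with hc
  set s : ℝ := ⟪a, cross3 b t⟫ with hs
  set u := ‖a - b‖ with hu
  set v := ‖a + b‖ with hv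
  have hvpos : 0 < v := norm_pos_iff.mpr hsum
  have hs2 : s ^ 2 = 1 - c ^ 2 := by
    rw [hs, gram3, haa, hbb, htt, hbt, hat, ← hc]; ring
  have hu2 : u ^ 2 = 2 - 2 * c := by
    rw [hu, norm_sub_sq_real, ← hc, ha, hb]; ring
  have hv2 : v ^ 2 = 2 + 2 * c := by
    rw [hv, norm_add_sq_real, ← hc, ha, hb]; ring
  have huv : u * v = -2 * s := by
    apply sq_eq_of_nonneg (mul_nonneg (norm_nonneg _) (norm_nonneg _)) (by linarith)
    rw [mul_pow]; nlinarith
  rw [smul_smul, ← sub_eq_zero, ← norm_eq_zero]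
  have hsq : ‖cross3 (a - b) t - (u * v⁻¹) • (a + b)‖ ^ 2 = 0 := by
    have e1 : ‖cross3 (a - b) t‖ ^ 2 = u ^ 2 := by
      rw [← real_inner_self_eq_norm_sq, lagrange3, htt, real_inner_self_eq_norm_sq, ← hu,
        inner_sub_left, hat, hbt]
      ring
    have e2 : ⟪cross3 (a - b) t, (u * v⁻¹) • (a + b)⟫ = (u * v⁻¹) * (-2 * s) := by
      rw [real_inner_smul_right, inner_cross3_sub_add, ← hs]
    have e3 : ‖(u * v⁻¹) • (a + b)‖ ^ 2 = (u * v⁻¹)^2 * v^2 := by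
      rw [norm_smul, mul_pow, ← hv, Real.norm_eq_abs, sq_abs]
    rw [norm_sub_sq_real, e1, e2, e3]
    have hsval : s = -(u * v) / 2 := by linarith
    rw [hsval]
    field_simp
    ring
  exact pow_eq_zero_iff two_ne_zero |>.mp hsq

/-- Second discrete Frenet equation (inscribed case): under the positive-twist condition,
`(DNᵉ)ᵢ = −κᵢ • Tᵛᵢ + τᵢ • Bᵛᵢ` with `κᵢ = ‖(DTᵉ)ᵢ‖` and `τᵢ = ‖(DBᵉ)ᵢ‖`. -/
theorem second_discrete_frenet_equation
    (γ T N B : ℤ → E3)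
    (hlen : ∀ i : ℤ, ‖γ (i + 1) - γ i‖ = 1)
    (hmid : ∀ i : ℤ, Even i → γ i = (2 : ℝ)⁻¹ • (γ (i + 1) + γ (i - 1)))
    (hT : ∀ i : ℤ, T i = γ (i + 1) - γ i)
    (hcross : ∀ i : ℤ, Even i → cross3 (T i) (T (i + 1)) ≠ 0)
    (hBeven : ∀ i : ℤ, Even i →
      B i = ‖cross3 (T i) (T (i + 1))‖⁻¹ • cross3 (T i) (T (i + 1)))
    (hBodd : ∀ i : ℤ, Odd i → B i = B (i - 1))
    (hN : ∀ i : ℤ, N i = cross3 (B i) (T i))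
    (Tv Nv Bv : ℤ → E3)
    (hMT : ∀ i : ℤ, T (i + 1) + T i ≠ 0)
    (hMN : ∀ i : ℤ, N (i + 1) + N i ≠ 0)
    (hMB : ∀ i : ℤ, B (i + 1) + B i ≠ 0)
    (hTv : ∀ i : ℤ, Tv i = ‖T (i + 1) + T i‖⁻¹ • (T (i + 1) + T i))
    (hNv : ∀ i : ℤ, Nv i = ‖N (i + 1) + N i‖⁻¹ • (N (i + 1) + N i))
    (hBv : ∀ i : ℤ, Bv i = ‖B (i + 1) + B i‖⁻¹ • (B (i + 1) + B i))
    (htwist : ∀ i : ℤ, Odd i → ⟪B (i + 1), N i⟫ ≤ 0)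
    : ∀ i : ℤ,
      N (i + 1) - N i = -(‖T (i + 1) - T i‖) • Tv i + ‖B (i + 1) - B i‖ • Bv i := by
  have hTunit : ∀ i : ℤ, ‖T i‖ = 1 := fun i => by rw [hT]; exact hlen i
  have hTT : ∀ j : ℤ, Even j → T j = T (j - 1) := by
    intro j hj
    have h2 : γ (j + 1) + γ (j - 1) = γ j + γ j := by
      conv_rhs => rw [hmid j hj]
      rw [← add_smul]; norm_num
    have h3 : j - 1 + 1 = j := by omega
    rw [hT, hT, h3, sub_eq_sub_iff_add_eq_add]
    exact h2
  have hBunit : ∀ j : ℤ, Even j → ‖B j‖ = 1 := by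
    intro j hj
    rw [hBeven j hj, norm_smul, norm_inv, norm_norm,
      inv_mul_cancel₀ (norm_ne_zero_iff.mpr (hcross j hj))]
  intro i
  rcases Int.even_or_odd i with hi | hi
  · -- even: torsion term vanishes
    have hi1 : Odd (i + 1) := Even.add_one hi
    have hB1 : B (i + 1) = B i := by
      have h := hBodd (i + 1) hi1
      have h3 : i + 1 - 1 = i := by omega
      rwa [h3] at h
    rw [hTv i, hB1, sub_self, norm_zero, zero_smul, add_zero]
    calc N (i + 1) - N i
        = cross3 (B i) (T (i + 1)) - cross3 (B i) (T i) := by rw [hN, hN, hB1]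
      _ = cross3 (B i) (T (i + 1) - T i) := (cross3_sub_right _ _ _).symm
      _ = cross3 (‖cross3 (T i) (T (i + 1))‖⁻¹ • cross3 (T i) (T (i + 1)))
            (T (i + 1) - T i) := by rw [← hBeven i hi]
      _ = -(‖T (i + 1) - T i‖) • (‖T (i + 1) + T i‖⁻¹ • (T (i + 1) + T i)) :=
          frenet_even (T i) (T (i + 1)) (hTunit i) (hTunit (i + 1)) (hcross i hi) (hMT i)
  · -- odd: curvature term vanishes
    have hi1 : Even (i + 1) := hi.add_one
    have hT1 : T (i + 1) = T i := by
      have h := hTT (i + 1) hi1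
      have h3 : i + 1 - 1 = i := by omega
      rwa [h3] at h
    have him1 : Even (i - 1) := by
      obtain ⟨k, hk⟩ := hi; exact ⟨k, by omega⟩
    have hii : i - 1 + 1 = i := by omega
    have hbB : B i = ‖cross3 (T (i - 1)) (T (i - 1 + 1))‖⁻¹ •
        cross3 (T (i - 1)) (T (i - 1 + 1)) := by
      rw [hBodd i hi]; exact hBeven (i - 1) him1
    have ha1 : ‖B (i + 1)‖ = 1 := hBunit (i + 1) hi1
    have hb1 : ‖B i‖ = 1 := by rw [hBodd i hi]; exact hBunit (i - 1) him1
    have hat : ⟪B (i + 1), T i⟫ = 0 := by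
      rw [hBeven (i + 1) hi1, real_inner_smul_left, hT1, inner_cross3_left, mul_zero]
    have hbt : ⟪B i, T i⟫ = 0 := by
      rw [hbB, real_inner_smul_left, hii, inner_cross3_right, mul_zero]
    have htw : ⟪B (i + 1), cross3 (B i) (T i)⟫ ≤ 0 := by
      have h := htwist i hi
      rwa [hN i] at h
    rw [hT1, sub_self, norm_zero, neg_zero, zero_smul, zero_add, hBv i]
    calc N (i + 1) - N i
        = cross3 (B (i + 1)) (T i) - cross3 (B i) (T i) := by rw [hN, hN, hT1]
      _ = cross3 (B (i + 1) - B i) (T i) := (cross3_sub_left _ _ _).symm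
      _ = ‖B (i + 1) - B i‖ • (‖B (i + 1) + B i‖⁻¹ • (B (i + 1) + B i)) :=
          frenet_odd _ _ _ ha1 hb1 (hTunit i) hat hbt htw (hMB i)
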